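/- arXiv:1512.04569 — 6 statements merged into one kernel-verified Lean document; each statement's English description precedes it below -/
import Mathlib

section
/- Let V be a finite-dimensional real inner product space with inner product a, let P : V → V be a-self-adjoint and positive definite, and let P₀ be an a-orthogonal projection. Define the hybrid operator P_hyb = P₀ + (I−P₀)P(I−P₀). Then the minimal eigenvalue of P_hyb (with respect to a) is at least min(1, λ_min(P)) where λ_min(P) is the minimal eigenvalue of P, and in particular if λ_min(P) ≤ 1 then λ_min(P_hyb) ≥ λ_min(P). -/
theorem stmt_1 {V : Type*} [AddCommGroup V] [Module ℝ V] [FiniteDimensional ℝ V]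
    (a : V → V → ℝ)
    (ha_add : ∀ x y z, a (x + y) z = a x z + a y z)
    (ha_smul : ∀ (c : ℝ) (x y : V), a (c • x) y = c * a x y)
    (ha_symm : ∀ x y, a x y = a y x)
    (ha_pos : ∀ x, x ≠ 0 → 0 < a x x)
    (P P₀ : V →ₗ[ℝ] V)
    (hPsa : ∀ u v, a (P u) v = a u (P v))
    (hPpos : ∀ u, u ≠ 0 → 0 < a (P u) u)
    (hproj : ∀ u, P₀ (P₀ u) = P₀ u)
    (hP₀sa : ∀ u v, a (P₀ u) v = a u (P₀ v))
    (lam_min : ℝ)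
    (hlam : ∀ u, lam_min * a u u ≤ a (P u) u) :
    (∀ u : V, min 1 lam_min * a u u ≤ a (P₀ u + (P (u - P₀ u) - P₀ (P (u - P₀ u)))) u) ∧
    (lam_min ≤ 1 →
      ∀ u : V, lam_min * a u u ≤ a (P₀ u + (P (u - P₀ u) - P₀ (P (u - P₀ u)))) u) := by
  -- basic linearity facts
  have ha_neg : ∀ x z, a (-x) z = -a x z := by
    intro x z
    have := ha_smul (-1) x z
    simpa using this
  have ha_sub : ∀ x y z, a (x - y) z = a x z - a y z := by
    intro x y z
    rw [sub_eq_add_neg, ha_add, ha_neg, sub_eq_add_neg]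
  have ha_sub' : ∀ x y z, a z (x - y) = a z x - a z y := by
    intro x y z
    rw [ha_symm, ha_sub, ha_symm x z, ha_symm y z]
  have ha_add' : ∀ x y z, a z (x + y) = a z x + a z y := by
    intro x y z
    rw [ha_symm, ha_add, ha_symm x z, ha_symm y z]
  have hzero : a (0 : V) 0 = 0 := by
    have := ha_smul 0 0 0
    simpa using this
  have hnn : ∀ x : V, 0 ≤ a x x := by
    intro x
    rcases eq_or_ne x 0 with h | h
    · subst h; exact le_of_eq hzero.symm
    · exact (ha_pos x h).le
  have key : ∀ u : V, a (P₀ u + (P (u - P₀ u) - P₀ (P (u - P₀ u)))) u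
      = a (P₀ u) (P₀ u) + a (P (u - P₀ u)) (u - P₀ u) ∧
      a u u = a (P₀ u) (P₀ u) + a (u - P₀ u) (u - P₀ u) := by
    intro u
    set p := P₀ u with hp
    set w := u - P₀ u with hw
    set q := P w with hq
    have e2 : a p u = a p p := by
      have h1 : a (P₀ p) u = a p (P₀ u) := hP₀sa p u
      rw [hproj u] at h1
      rw [h1, ← hp]
    have e3 : a (P₀ q) u = a q p := by rw [hP₀sa, ← hp]
    have e5 : a p w = 0 := by
      rw [hw, ha_sub', ha_symm p u, ha_symm, e2]
      rw [← hp, sub_self]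
    constructor
    · rw [ha_add, ha_sub, e2, e3, hw, ha_sub', ha_symm q u, ha_symm q p]
    · have hu : u = p + w := by rw [hp, hw]; abel
      calc a u u = a (p + w) (p + w) := by rw [← hu]
        _ = a p p + a p w + (a w p + a w w) := by rw [ha_add, ha_add', ha_add']
        _ = a p p + a w w := by rw [e5, ha_symm w p, e5]; ring
  have main : ∀ u : V, min 1 lam_min * a u u
      ≤ a (P₀ u + (P (u - P₀ u) - P₀ (P (u - P₀ u)))) u := by
    intro u
    obtain ⟨h1, h2⟩ := key u
    rw [h1, h2]
    have hb := hlam (u - P₀ u)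
    have hn1 := hnn (P₀ u)
    have hn2 := hnn (u - P₀ u)
    have hm1 : min 1 lam_min ≤ 1 := min_le_left _ _
    have hm2 : min 1 lam_min ≤ lam_min := min_le_right _ _
    nlinarith
  refine ⟨main, fun hle u => ?_⟩
  have := main u
  rwa [min_eq_right hle] at this
end

section
/- Let V be a finite-dimensional real inner product space with inner product a, let P : V → V be a-self-adjoint with λ_max(P) ≥ 1, and let P₀ be an a-orthogonal projection. Define P_hyb = P₀ + (I−P₀)P(I−P₀). Then λ_max(P_hyb) ≤ λ_max(P). -/
theorem stmt_2 {V : Type*} [AddCommGroup V] [Module ℝ V] [FiniteDimensional ℝ V]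
    (a : V → V → ℝ)
    (ha_add : ∀ x y z, a (x + y) z = a x z + a y z)
    (ha_smul : ∀ (c : ℝ) (x y : V), a (c • x) y = c * a x y)
    (ha_symm : ∀ x y, a x y = a y x)
    (ha_pos : ∀ x, x ≠ 0 → 0 < a x x)
    (P P₀ : V →ₗ[ℝ] V)
    (hPsa : ∀ u v, a (P u) v = a u (P v))
    (hproj : ∀ u, P₀ (P₀ u) = P₀ u)
    (hP₀sa : ∀ u v, a (P₀ u) v = a u (P₀ v))
    (lam_max : ℝ) (hlam1 : 1 ≤ lam_max)
    (hlam : ∀ u, a (P u) u ≤ lam_max * a u u) :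
    ∀ u : V, a (P₀ u + (P (u - P₀ u) - P₀ (P (u - P₀ u)))) u ≤ lam_max * a u u := by
  have ha0 : ∀ y, a 0 y = 0 := by
    intro y
    have := ha_smul 0 0 y
    simpa using this
  have ha_sub : ∀ x y z, a (x - y) z = a x z - a y z := by
    intro x y z
    have h1 := ha_add (x - y) y z
    simp at h1
    linarith
  have ha_add' : ∀ x y z, a x (y + z) = a x y + a x z := by
    intro x y z
    rw [ha_symm, ha_add, ha_symm y, ha_symm z]
  have ha_sub' : ∀ x y z, a x (y - z) = a x y - a x z := by
    intro x y z
    rw [ha_symm, ha_sub, ha_symm y, ha_symm z]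
  have ha_nonneg : ∀ x, 0 ≤ a x x := by
    intro x
    by_cases hx : x = 0
    · simp [hx, ha0]
    · exact (ha_pos x hx).le
  intro u
  set v := P₀ u with hv
  set w := u - P₀ u with hw
  have huvw : u = v + w := by simp [hv, hw]
  -- orthogonality: a v w = 0
  have horth : a v w = 0 := by
    rw [ha_symm, hw, hv, ha_sub, hP₀sa u (P₀ u), hproj, ha_symm u]
    ring
  -- a v u = a v v
  have havu : a v u = a v v := by
    rw [huvw, ha_add', horth, add_zero]
  -- a (P w) u - a (P₀ (P w)) u = a (P w) w
  have hPwu : a (P w) u - a (P₀ (P w)) u = a (P w) w := by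
    have h1 : a (P₀ (P w)) u = a (P w) v := by
      rw [hP₀sa, ha_symm]
    rw [h1, ← ha_sub', huvw]
    congr 1
    abel
  -- a u u = a v v + a w w
  have huu : a u u = a v v + a w w := by
    rw [huvw, ha_add, ha_add', ha_add', horth]
    have : a w v = 0 := by rw [ha_symm]; exact horth
    rw [this]; ring
  have hPww : a (P w) w ≤ lam_max * a w w := hlam w
  have hvv : a v v ≤ lam_max * a v v := le_mul_of_one_le_left (ha_nonneg v) hlam1
  calc a (v + (P w - P₀ (P w))) u
      = a v u + (a (P w) u - a (P₀ (P w)) u) := by rw [ha_add, ha_sub]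
    _ = a v v + a (P w) w := by rw [havu, hPwu]
    _ ≤ lam_max * a v v + lam_max * a w w := add_le_add hvv hPww
    _ = lam_max * a u u := by rw [huu]; ring
end

section
/- Let V be a finite-dimensional real inner product space with inner product a, and let P₁,…,P_N be a-orthogonal projections onto subspaces V₁,…,V_N whose sum is V. Define P_AS = Σᵢ Pᵢ. Suppose there exists C₀ > 0 such that for every u ∈ V there is a decomposition u = Σᵢ uᵢ with uᵢ ∈ Vᵢ and Σᵢ a(uᵢ,uᵢ) ≤ C₀² a(u,u). Then λ_min(P_AS) ≥ C₀^{-2}, i.e., a(P_AS u, u) ≥ C₀^{-2} a(u,u) for all u ∈ V. -/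
section aux
variable {V : Type*} [AddCommGroup V] [Module ℝ V]
  (a : V → V → ℝ)
  (ha_add : ∀ x y z, a (x + y) z = a x z + a y z)
  (ha_smul : ∀ (c : ℝ) (x y : V), a (c • x) y = c * a x y)
  (ha_symm : ∀ x y, a x y = a y x)
  (ha_pos : ∀ x, x ≠ 0 → 0 < a x x)

include ha_smul in
lemma aux_zero_left : ∀ y, a 0 y = 0 := by
  intro y
  have := ha_smul 0 0 y
  simpa using this

include ha_smul ha_pos in
lemma aux_nonneg : ∀ x, 0 ≤ a x x := by
  intro x
  by_cases h : x = 0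
  · subst h; rw [aux_zero_left a ha_smul]
  · exact (ha_pos x h).le

include ha_add ha_smul ha_symm ha_pos in
lemma aux_cs : ∀ x y, (a x y) ^ 2 ≤ a x x * a y y := by
  intro x y
  have key : ∀ t : ℝ, 0 ≤ a y y * (t * t) + (2 * a x y) * t + a x x := by
    intro t
    have h0 : 0 ≤ a (t • y + x) (t • y + x) := aux_nonneg a ha_smul ha_pos _
    have s1 : ∀ z, a (t • y + x) z = t * a y z + a x z := fun z => by
      rw [ha_add, ha_smul]
    have e1 : a (t • y + x) (t • y + x) = a y y * (t * t) + (2 * a x y) * t + a x x := by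
      rw [s1, ha_symm y, s1, ha_symm x (t • y + x), s1, ha_symm y x]
      ring
    linarith [e1 ▸ h0]
  have hd := discrim_le_zero key
  rw [discrim] at hd
  nlinarith [hd]

omit [Module ℝ V] in
include ha_add in
lemma aux_sum {N : ℕ} (f : Fin N → V) (z : V) :
    a (∑ i, f i) z = ∑ i, a (f i) z := by
  have h0 : a 0 z = 0 := by
    have := ha_add 0 0 z; simpa using this
  classical
  induction (Finset.univ : Finset (Fin N)) using Finset.induction with
  | empty => simpa using h0
  | insert _ _ hx ih =>
      rw [Finset.sum_insert hx, Finset.sum_insert hx, ha_add, ih]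

end aux

theorem stmt_4 {V : Type*} [AddCommGroup V] [Module ℝ V] [FiniteDimensional ℝ V]
    (a : V → V → ℝ)
    (ha_add : ∀ x y z, a (x + y) z = a x z + a y z)
    (ha_smul : ∀ (c : ℝ) (x y : V), a (c • x) y = c * a x y)
    (ha_symm : ∀ x y, a x y = a y x)
    (ha_pos : ∀ x, x ≠ 0 → 0 < a x x)
    (N : ℕ) (Vi : Fin N → Submodule ℝ V) (P : Fin N → V →ₗ[ℝ] V)
    (hrange : ∀ i u, P i u ∈ Vi i)
    (hproj : ∀ i u, ∀ v ∈ Vi i, a (P i u) v = a u v)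
    (hspan : (⨆ i, Vi i) = ⊤)
    (C₀ : ℝ) (hC₀ : 0 < C₀)
    (hstable : ∀ u : V, ∃ w : Fin N → V, (∀ i, w i ∈ Vi i) ∧ u = ∑ i, w i ∧
      ∑ i, a (w i) (w i) ≤ C₀ ^ 2 * a u u) :
    ∀ u : V, (C₀ ^ 2)⁻¹ * a u u ≤ a (∑ i, P i u) u := by
  intro u
  obtain ⟨w, hw, hu, hsum⟩ := hstable u
  have hnn := aux_nonneg a ha_smul ha_pos
  have hcs := aux_cs a ha_add ha_smul ha_symm ha_pos
  -- S = a (∑ P i u) u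
  have hS : a (∑ i, P i u) u = ∑ i, a (P i u) (P i u) := by
    rw [aux_sum a ha_add]
    refine Finset.sum_congr rfl fun i _ => ?_
    rw [ha_symm (P i u) u, ← hproj i u (P i u) (hrange i u), ha_symm]
  have hSnn : 0 ≤ a (∑ i, P i u) u := by
    rw [hS]; exact Finset.sum_nonneg fun i _ => hnn _
  -- a u u = ∑ a (P i u) (w i)
  have huu : a u u = ∑ i, a (P i u) (w i) := by
    have h1 : a u u = ∑ i, a u (w i) :=
      calc a u u = a (∑ i, w i) u := by rw [← hu]
        _ = ∑ i, a (w i) u := aux_sum a ha_add _ _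
        _ = ∑ i, a u (w i) := Finset.sum_congr rfl fun i _ => ha_symm _ _
    rw [h1]
    exact Finset.sum_congr rfl fun i _ => (hproj i u (w i) (hw i)).symm
  -- Cauchy-Schwarz step
  set f : Fin N → ℝ := fun i => Real.sqrt (a (P i u) (P i u))
  set g : Fin N → ℝ := fun i => Real.sqrt (a (w i) (w i))
  have hterm : ∀ i, a (P i u) (w i) ≤ f i * g i := by
    intro i
    have h1 : a (P i u) (w i) ≤ |a (P i u) (w i)| := le_abs_self _
    have h2 : |a (P i u) (w i)| = Real.sqrt ((a (P i u) (w i)) ^ 2) := by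
      rw [Real.sqrt_sq_eq_abs]
    have h3 : Real.sqrt ((a (P i u) (w i)) ^ 2) ≤
        Real.sqrt (a (P i u) (P i u) * a (w i) (w i)) :=
      Real.sqrt_le_sqrt (hcs _ _)
    have h4 : Real.sqrt (a (P i u) (P i u) * a (w i) (w i)) = f i * g i :=
      Real.sqrt_mul (hnn _) _
    linarith [h2 ▸ h1, h4 ▸ h3]
  have hsum_le : ∑ i, a (P i u) (w i) ≤ ∑ i, f i * g i :=
    Finset.sum_le_sum fun i _ => hterm i
  have hCS2 : (∑ i, f i * g i) ^ 2 ≤ (∑ i, f i ^ 2) * ∑ i, g i ^ 2 :=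
    Finset.sum_mul_sq_le_sq_mul_sq _ _ _
  have hf2 : ∑ i, f i ^ 2 = ∑ i, a (P i u) (P i u) :=
    Finset.sum_congr rfl fun i _ => Real.sq_sqrt (hnn _)
  have hg2 : ∑ i, g i ^ 2 = ∑ i, a (w i) (w i) :=
    Finset.sum_congr rfl fun i _ => Real.sq_sqrt (hnn _)
  have hfg_nn : 0 ≤ ∑ i, f i * g i :=
    Finset.sum_nonneg fun i _ => mul_nonneg (Real.sqrt_nonneg _) (Real.sqrt_nonneg _)
  -- main inequality: (a u u)^2 ≤ S * (C₀^2 * a u u)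
  have hmain : (a u u) ^ 2 ≤ a (∑ i, P i u) u * (C₀ ^ 2 * a u u) := by
    have h1 : (a u u) ^ 2 ≤ (∑ i, f i * g i) ^ 2 := by
      rw [huu]
      exact pow_le_pow_left₀ (by rw [← huu]; exact hnn u) hsum_le 2
    calc (a u u) ^ 2 ≤ (∑ i, f i * g i) ^ 2 := h1
      _ ≤ (∑ i, f i ^ 2) * ∑ i, g i ^ 2 := hCS2
      _ = (∑ i, a (P i u) (P i u)) * ∑ i, a (w i) (w i) := by rw [hf2, hg2]
      _ ≤ (∑ i, a (P i u) (P i u)) * (C₀ ^ 2 * a u u) := by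
          apply mul_le_mul_of_nonneg_left hsum
          exact Finset.sum_nonneg fun i _ => hnn _
      _ = a (∑ i, P i u) u * (C₀ ^ 2 * a u u) := by rw [hS]
  rcases eq_or_lt_of_le (hnn u) with h0 | h0
  · rw [← h0, mul_zero]; exact hSnn
  · rw [inv_mul_le_iff₀ (by positivity)]
    nlinarith [hmain, h0]
end

section
/- Let V be a finite-dimensional real inner product space with inner product a, and let P₁,…,P_N be a-orthogonal projections. Suppose each element of V lies in the span of at most N_c of the subspaces in the sense that the subspaces can be colored with N_c colors so that projections of the same color have mutually a-orthogonal ranges. Then λ_max(Σᵢ Pᵢ) ≤ N_c. -/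
theorem stmt_5 {V : Type*} [AddCommGroup V] [Module ℝ V] [FiniteDimensional ℝ V]
    (a : V → V → ℝ)
    (ha_add : ∀ x y z, a (x + y) z = a x z + a y z)
    (ha_smul : ∀ (c : ℝ) (x y : V), a (c • x) y = c * a x y)
    (ha_symm : ∀ x y, a x y = a y x)
    (ha_pos : ∀ x, x ≠ 0 → 0 < a x x)
    (N Nc : ℕ) (Vi : Fin N → Submodule ℝ V) (P : Fin N → V →ₗ[ℝ] V)
    (hrange : ∀ i u, P i u ∈ Vi i)
    (hproj : ∀ i u, ∀ v ∈ Vi i, a (P i u) v = a u v)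
    (color : Fin N → Fin Nc)
    (hcolor : ∀ i j, i ≠ j → color i = color j →
      ∀ u ∈ Vi i, ∀ v ∈ Vi j, a u v = 0) :
    ∀ u : V, a (∑ i, P i u) u ≤ (Nc : ℝ) * a u u := by
  intro u
  have ha0 : ∀ y, a 0 y = 0 := by
    intro y
    have := ha_smul 0 0 y
    simpa using this
  have hneg : ∀ x y, a (-x) y = - a x y := by
    intro x y
    have := ha_smul (-1) x y
    simpa using this
  have hsub : ∀ x y z, a (x - y) z = a x z - a y z := by
    intro x y z
    rw [sub_eq_add_neg, ha_add, hneg]; ring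
  have hsum : ∀ (s : Finset (Fin N)) (f : Fin N → V) (y : V),
      a (∑ i ∈ s, f i) y = ∑ i ∈ s, a (f i) y := by
    intro s f y
    induction s using Finset.cons_induction with
    | empty => simp [ha0]
    | cons i s hi ih => rw [Finset.sum_cons, Finset.sum_cons, ha_add, ih]
  have hnn : ∀ x, 0 ≤ a x x := by
    intro x
    by_cases hx : x = 0
    · simp [hx, ha0]
    · exact (ha_pos x hx).le
  -- each projection: a (P i u) (P i u) = a (P i u) u
  have hPi : ∀ i, a (P i u) (P i u) = a (P i u) u := by
    intro i
    rw [hproj i u (P i u) (hrange i u), ha_symm]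
  set S : Fin Nc → Finset (Fin N) := fun c => Finset.univ.filter (fun i => color i = c)
    with hS
  set w : Fin Nc → V := fun c => ∑ i ∈ S c, P i u with hw
  have hww : ∀ c, a (w c) (w c) = a (w c) u := by
    intro c
    have h1 : a (w c) (w c) = ∑ i ∈ S c, a (P i u) (w c) := hsum _ _ _
    have h2 : ∀ i ∈ S c, a (P i u) (w c) = a (P i u) (P i u) := by
      intro i hi
      have hz : ∀ j ∈ S c, j ≠ i → a (P j u) (P i u) = 0 := by
        intro j hj hji
        have hic : color i = c := (Finset.mem_filter.mp hi).2
        have hjc : color j = c := (Finset.mem_filter.mp hj).2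
        exact hcolor j i hji (hjc.trans hic.symm) _ (hrange j u) _ (hrange i u)
      rw [ha_symm (P i u) (w c), hsum, Finset.sum_eq_single_of_mem i hi hz]
    have h3 : a (w c) u = ∑ i ∈ S c, a (P i u) u := hsum _ _ _
    rw [h1, h3, Finset.sum_congr rfl h2]
    exact Finset.sum_congr rfl (fun i _ => hPi i)
  have hwle : ∀ c, a (w c) u ≤ a u u := by
    intro c
    have h0 : 0 ≤ a (u - w c) (u - w c) := hnn _
    have hexp : a (u - w c) (u - w c)
        = a u u - a (w c) u - (a u (w c) - a (w c) (w c)) := by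
      have e1 : ∀ z, a z (u - w c) = a (u - w c) z := fun z => ha_symm _ _
      rw [hsub, ha_symm u (u - w c), hsub, ha_symm (w c) (u - w c), hsub]
    rw [hexp, ha_symm u (w c), hww c] at h0
    linarith
  have hfib : ∑ i, a (P i u) u = ∑ c, ∑ i ∈ S c, a (P i u) u := by
    rw [hS]
    exact (Finset.sum_fiberwise Finset.univ color (fun i => a (P i u) u)).symm
  calc a (∑ i, P i u) u = ∑ i, a (P i u) u := hsum _ _ _
    _ = ∑ c, ∑ i ∈ S c, a (P i u) u := hfib
    _ = ∑ c, a (w c) u := by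
        refine Finset.sum_congr rfl (fun c _ => ?_)
        exact (hsum _ _ _).symm
    _ ≤ ∑ c : Fin Nc, a u u := Finset.sum_le_sum (fun c _ => hwle c)
    _ = (Nc : ℝ) * a u u := by simp [mul_comm]
end

section
/- Let V be a finite-dimensional real inner product space with inner product a. Suppose P₁,…,P_N are a-orthogonal projections such that the additive operator P_AS = Σᵢ Pᵢ satisfies the lower bound a(P_AS u, u) ≥ C₀^{-2} a(u,u) for all u. Then the multiplicative error propagation operator E = (I−P_N)⋯(I−P₁) satisfies ‖E‖_a² ≤ 1 − 1/((2N²+1)C₀²) < 1; in particular ‖E‖_a < 1, so the multiplicative Schwarz iteration converges. -/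
open scoped RealInnerProductSpace

theorem stmt_14 {V : Type*} [AddCommGroup V] [Module ℝ V] [FiniteDimensional ℝ V]
    (a : V → V → ℝ)
    (ha_add : ∀ x y z, a (x + y) z = a x z + a y z)
    (ha_smul : ∀ (c : ℝ) (x y : V), a (c • x) y = c * a x y)
    (ha_symm : ∀ x y, a x y = a y x)
    (ha_pos : ∀ x, x ≠ 0 → 0 < a x x)
    (N : ℕ) (hN : 0 < N) (P : Fin N → Module.End ℝ V)
    (hproj : ∀ i, P i * P i = P i)
    (hsa : ∀ i (u v : V), a (P i u) v = a u (P i v))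
    (C₀ : ℝ) (hC₀ : 0 < C₀)
    (hlow : ∀ u : V, (C₀ ^ 2)⁻¹ * a u u ≤ a (∑ i, P i u) u) :
    (1 - 1 / ((2 * (N : ℝ) ^ 2 + 1) * C₀ ^ 2) < 1) ∧
    ∀ u : V,
      a (((List.ofFn fun i => (1 : Module.End ℝ V) - P i).reverse.prod) u)
        (((List.ofFn fun i => (1 : Module.End ℝ V) - P i).reverse.prod) u) ≤
      (1 - 1 / ((2 * (N : ℝ) ^ 2 + 1) * C₀ ^ 2)) * a u u := by
  have ha00 : a 0 0 = 0 := by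
    have h := ha_add 0 0 0
    simp only [add_zero] at h
    linarith
  letI cd : InnerProductSpace.Core ℝ V :=
    { inner := a
      conj_inner_symm := fun x y => by simpa using ha_symm y x
      re_inner_nonneg := fun x => by
        rcases eq_or_ne x 0 with h | h
        · subst h; simpa using le_of_eq ha00.symm
        · simpa using (ha_pos x h).le
      add_left := ha_add
      smul_left := fun x y r => by simpa using ha_smul r x y
      definite := fun x hx => by
        by_contra h
        exact (ha_pos x h).ne' hx }
  letI : NormedAddCommGroup V := cd.toNormedAddCommGroup
  letI : InnerProductSpace ℝ V := InnerProductSpace.ofCore cd.toCore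
  have hinner : ∀ x y : V, a x y = ⟪x, y⟫ := fun _ _ => rfl
  have hNsq : (0:ℝ) < (2 * (N:ℝ)^2 + 1) * C₀^2 := by
    have : (0:ℝ) < 2 * (N:ℝ)^2 + 1 := by positivity
    exact mul_pos this (pow_pos hC₀ 2)
  have hc_pos : (0:ℝ) < 1 / ((2 * (N:ℝ)^2 + 1) * C₀^2) := by positivity
  refine ⟨by linarith, fun u => ?_⟩
  -- extend P to ℕ
  set P' : ℕ → Module.End ℝ V := fun k => if h : k < N then P ⟨k, h⟩ else 0 with hP'def
  have hP' : ∀ (i : Fin N), P' (i : ℕ) = P i := fun i => by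
    simp [hP'def, i.isLt]
  -- iterates
  set v : ℕ → V := fun k => Nat.rec u (fun k vk => vk - P' k vk) k with hvdef
  have hv0 : v 0 = u := rfl
  have hvs : ∀ k, v (k + 1) = v k - P' k (v k) := fun k => rfl
  -- identify the product
  have hQ : ∀ n : ℕ,
      ((List.ofFn fun i : Fin n => (1 : Module.End ℝ V) - P' (i : ℕ)).reverse.prod) u = v n := by
    intro n
    induction n with
    | zero => simp [hv0]
    | succ n ih =>
      rw [List.ofFn_succ']
      simp only [List.concat_eq_append, List.reverse_append, List.reverse_cons,
        List.reverse_nil, List.nil_append, List.singleton_append, List.prod_cons]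
      rw [Module.End.mul_apply]
      simp only [Fin.coe_castSucc] at *
      rw [ih]
      simp [hvs n, Fin.val_last]
  have hprod_eq :
      ((List.ofFn fun i : Fin N => (1 : Module.End ℝ V) - P i).reverse.prod) u = v N := by
    rw [← hQ N]
    have hfun : (fun i : Fin N => (1 : Module.End ℝ V) - P i)
        = fun i : Fin N => (1 : Module.End ℝ V) - P' (i : ℕ) :=
      funext fun i => by rw [hP' i]
    rw [hfun]
  -- norms as squares
  have hnorm : ∀ x : V, a x x = ‖x‖ ^ 2 := fun x => by
    rw [hinner]; exact real_inner_self_eq_norm_sq x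
  -- P i is idempotent/selfadjoint facts
  have hPP : ∀ (i : Fin N) (x : V), P i (P i x) = P i x := fun i x => by
    conv_rhs => rw [← hproj i]
    rfl
  have hPix : ∀ (i : Fin N) (x : V), ⟪x, P i x⟫ = ‖P i x‖ ^ 2 := by
    intro i x
    have h : a (P i x) (P i x) = a x (P i x) := by rw [hsa i x (P i x), hPP]
    rw [← hnorm]
    exact h.symm
  have hPle : ∀ (i : Fin N) (x : V), ‖P i x‖ ≤ ‖x‖ := by
    intro i x
    have h1 : ‖P i x‖ ^ 2 = ⟪x, P i x⟫ := (hPix i x).symm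
    have h2 : ⟪x, P i x⟫ ≤ ‖x‖ * ‖P i x‖ := real_inner_le_norm x (P i x)
    rcases (norm_nonneg (P i x)).eq_or_lt with h | h
    · rw [← h]; exact norm_nonneg x
    · have : ‖P i x‖ * ‖P i x‖ ≤ ‖x‖ * ‖P i x‖ := by nlinarith
      exact le_of_mul_le_mul_right this h
  -- one step norm identity
  have hstep : ∀ k, k < N → ‖v (k + 1)‖ ^ 2 = ‖v k‖ ^ 2 - ‖P' k (v k)‖ ^ 2 := by
    intro k hk
    have hPk : P' k = P ⟨k, hk⟩ := dif_pos hk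
    rw [hvs k, ← real_inner_self_eq_norm_sq, real_inner_sub_sub_self,
      real_inner_self_eq_norm_sq, hPk, hPix ⟨k, hk⟩ (v k), real_inner_self_eq_norm_sq]
    ring
  -- telescoping
  have htel : ∀ n, n ≤ N →
      ‖v n‖ ^ 2 = ‖u‖ ^ 2 - ∑ k ∈ Finset.range n, ‖P' k (v k)‖ ^ 2 := by
    intro n
    induction n with
    | zero => simp [hv0]
    | succ n ih =>
      intro hn
      rw [hstep n (by omega), ih (by omega), Finset.sum_range_succ]
      ring
  -- difference identity
  have hdiff : ∀ n, u - v n = ∑ k ∈ Finset.range n, P' k (v k) := by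
    intro n
    induction n with
    | zero => simp [hv0]
    | succ n ih =>
      rw [hvs n, Finset.sum_range_succ, ← ih]
      abel
  set b : ℕ → ℝ := fun j => ‖P' j (v j)‖ with hbdef
  have hb0 : ∀ j, 0 ≤ b j := fun j => norm_nonneg _
  set S : ℝ := ∑ j ∈ Finset.range N, b j with hSdef
  set T : ℝ := ∑ j ∈ Finset.range N, b j ^ 2 with hTdef
  -- bound ‖P i u‖ ≤ S
  have hkey : ∀ i : Fin N, ‖P i u‖ ≤ S := by
    intro i
    have hu : u = v (i : ℕ) + ∑ k ∈ Finset.range (i : ℕ), P' k (v k) := by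
      rw [← hdiff (i : ℕ)]; abel
    have hPu : P i u = P i (v (i : ℕ)) + ∑ k ∈ Finset.range (i : ℕ), P i (P' k (v k)) := by
      conv_lhs => rw [hu]
      rw [map_add, map_sum]
    calc ‖P i u‖ ≤ ‖P i (v (i : ℕ))‖ + ‖∑ k ∈ Finset.range (i : ℕ), P i (P' k (v k))‖ := by
          rw [hPu]; exact norm_add_le _ _
      _ ≤ ‖P i (v (i : ℕ))‖ + ∑ k ∈ Finset.range (i : ℕ), ‖P i (P' k (v k))‖ := by
          gcongr
          exact norm_sum_le _ _
      _ ≤ b (i : ℕ) + ∑ k ∈ Finset.range (i : ℕ), b k := by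
          gcongr with k hk
          · rw [hbdef]; simp only []
            rw [hP' i]
          · exact hPle i _
      _ = ∑ k ∈ Finset.range ((i : ℕ) + 1), b k := by
          rw [Finset.sum_range_succ]; ring
      _ ≤ S := by
          rw [hSdef]
          exact Finset.sum_le_sum_of_subset_of_nonneg
            (Finset.range_subset_range.2 i.isLt) (fun k _ _ => hb0 k)
  -- additive lower bound
  have hadd_sum : a (∑ i, P i u) u = ∑ i : Fin N, a (P i u) u := by
    exact map_sum (AddMonoidHom.mk' (fun x => a x u) (fun x y => ha_add x y u)) _ _
  have hlow2 : (C₀ ^ 2)⁻¹ * ‖u‖ ^ 2 ≤ ∑ i : Fin N, ‖P i u‖ ^ 2 := by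
    have h1 := hlow u
    rw [hadd_sum] at h1
    rw [← hnorm]
    calc (C₀ ^ 2)⁻¹ * a u u ≤ ∑ i : Fin N, a (P i u) u := h1
      _ = ∑ i : Fin N, ‖P i u‖ ^ 2 := by
          refine Finset.sum_congr rfl fun i _ => ?_
          rw [ha_symm, hinner, hPix]
  -- Cauchy–Schwarz : S ^ 2 ≤ N * T
  have hCS : S ^ 2 ≤ (N : ℝ) * T := by
    have := Finset.sum_mul_sq_le_sq_mul_sq (Finset.range N) (fun _ => (1 : ℝ)) b
    simpa [hSdef, hTdef, mul_comm] using this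
  have hsumbound : ∑ i : Fin N, ‖P i u‖ ^ 2 ≤ (N : ℝ) ^ 2 * T := by
    have hS0 : 0 ≤ S := Finset.sum_nonneg fun j _ => hb0 j
    calc ∑ i : Fin N, ‖P i u‖ ^ 2 ≤ ∑ _i : Fin N, S ^ 2 := by
          refine Finset.sum_le_sum fun i _ => ?_
          have := hkey i
          nlinarith [norm_nonneg (P i u)]
      _ = (N : ℝ) * S ^ 2 := by simp [mul_comm]
      _ ≤ (N : ℝ) * ((N : ℝ) * T) := by
          have hN0 : (0:ℝ) ≤ (N:ℝ) := Nat.cast_nonneg N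
          exact mul_le_mul_of_nonneg_left hCS hN0
      _ = (N : ℝ) ^ 2 * T := by ring
  -- combine
  have hT_lb : (1 / ((2 * (N : ℝ) ^ 2 + 1) * C₀ ^ 2)) * ‖u‖ ^ 2 ≤ T := by
    have hN1 : (1:ℝ) ≤ (N:ℝ) := by exact_mod_cast hN
    have hNpos : (0:ℝ) < (N:ℝ) ^ 2 * C₀ ^ 2 := by positivity
    have h1 : (C₀ ^ 2)⁻¹ * ‖u‖ ^ 2 ≤ (N : ℝ) ^ 2 * T := le_trans hlow2 hsumbound
    have h2 : (1 / ((N : ℝ) ^ 2 * C₀ ^ 2)) * ‖u‖ ^ 2 ≤ T := by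
      rw [div_mul_eq_mul_div, div_le_iff₀ hNpos]
      calc 1 * ‖u‖ ^ 2 = (C₀ ^ 2) * ((C₀ ^ 2)⁻¹ * ‖u‖ ^ 2) := by
            field_simp
        _ ≤ (C₀ ^ 2) * ((N : ℝ) ^ 2 * T) := by
            exact mul_le_mul_of_nonneg_left h1 (by positivity)
        _ = T * ((N : ℝ) ^ 2 * C₀ ^ 2) := by ring
    refine le_trans ?_ h2
    have hle : 1 / ((2 * (N : ℝ) ^ 2 + 1) * C₀ ^ 2) ≤ 1 / ((N : ℝ) ^ 2 * C₀ ^ 2) := by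
      apply one_div_le_one_div_of_le hNpos
      nlinarith [pow_pos hC₀ 2]
    exact mul_le_mul_of_nonneg_right hle (by positivity)
  have hfinal := htel N le_rfl
  rw [hprod_eq, hnorm, hnorm, hfinal]
  have : ∑ k ∈ Finset.range N, ‖P' k (v k)‖ ^ 2 = T := rfl
  rw [this]
  nlinarith [hT_lb]
end

section
/- Let V be a finite-dimensional real inner product space with inner product a, let V₀ ⊆ V be a subspace with a-orthogonal projection P₀ onto V₀, and let P be a-self-adjoint positive definite with eigenvalues in [λ_min, λ_max] where λ_min ≤ 1 ≤ λ_max. Then every eigenvalue of the hybrid operator P_hyb = P₀ + (I−P₀)P(I−P₀) lies in [λ_min, λ_max]; hence κ(P_hyb) ≤ κ(P) = λ_max/λ_min. -/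
theorem stmt_16 {V : Type*} [AddCommGroup V] [Module ℝ V] [FiniteDimensional ℝ V]
    (a : V → V → ℝ)
    (ha_add : ∀ x y z, a (x + y) z = a x z + a y z)
    (ha_smul : ∀ (c : ℝ) (x y : V), a (c • x) y = c * a x y)
    (ha_symm : ∀ x y, a x y = a y x)
    (ha_pos : ∀ x, x ≠ 0 → 0 < a x x)
    (V₀ : Submodule ℝ V) (P₀ : V →ₗ[ℝ] V)
    (hrange : ∀ u, P₀ u ∈ V₀)
    (horth : ∀ u, ∀ v ∈ V₀, a (P₀ u) v = a u v)
    (P : V →ₗ[ℝ] V)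
    (hsa : ∀ u v, a (P u) v = a u (P v))
    (lam_min lam_max : ℝ) (h1 : lam_min ≤ 1) (h2 : 1 ≤ lam_max) (hpos : 0 < lam_min)
    (hlow : ∀ u, lam_min * a u u ≤ a (P u) u)
    (hhigh : ∀ u, a (P u) u ≤ lam_max * a u u) :
    ∀ u : V, lam_min * a u u ≤ a (P₀ u + (P (u - P₀ u) - P₀ (P (u - P₀ u)))) u ∧
      a (P₀ u + (P (u - P₀ u) - P₀ (P (u - P₀ u)))) u ≤ lam_max * a u u := by
  intro u
  have haz : ∀ z, a 0 z = 0 := by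
    intro z
    have := ha_smul 0 0 z
    simpa using this
  have ha_sub : ∀ x y z, a (x - y) z = a x z - a y z := by
    intro x y z
    have h' : a (x - y + y) z = a (x - y) z + a y z := ha_add _ _ _
    rw [sub_add_cancel] at h'
    linarith
  have ha_addr : ∀ x y z, a x (y + z) = a x y + a x z := by
    intro x y z; rw [ha_symm, ha_add, ha_symm y, ha_symm z]
  have hnn : ∀ x, 0 ≤ a x x := by
    intro x
    by_cases h : x = 0
    · simp [h, haz]
    · exact (ha_pos x h).le
  set w := u - P₀ u with hw
  have hworth : ∀ v ∈ V₀, a w v = 0 := by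
    intro v hv
    rw [hw, ha_sub, horth u v hv]; ring
  have hu : u = P₀ u + w := by simp [hw]
  have hdecomp : a u u = a (P₀ u) (P₀ u) + a w w := by
    calc a u u = a (P₀ u + w) (P₀ u + w) := by rw [← hu]
    _ = a (P₀ u) (P₀ u) + a (P₀ u) w + (a w (P₀ u) + a w w) := by
        rw [ha_add, ha_addr, ha_addr]
    _ = a (P₀ u) (P₀ u) + a w w := by
        rw [ha_symm (P₀ u) w, hworth (P₀ u) (hrange u)]; ring
  have hform : a (P₀ u + (P w - P₀ (P w))) u = a (P₀ u) (P₀ u) + a (P w) w := by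
    have e1 : a (P₀ u) u = a (P₀ u) (P₀ u) := by
      rw [ha_symm]
      exact (horth u (P₀ u) (hrange u)).symm
    have e2 : a (P w - P₀ (P w)) u = a (P w) w := by
      calc a (P w - P₀ (P w)) u = a (P w - P₀ (P w)) (P₀ u + w) := by rw [← hu]
      _ = a (P w) (P₀ u) - a (P₀ (P w)) (P₀ u) + (a (P w) w - a (P₀ (P w)) w) := by
          rw [ha_addr, ha_sub, ha_sub]
      _ = a (P w) w := by
          rw [horth (P w) (P₀ u) (hrange u), ha_symm (P₀ (P w)) w,
            hworth (P₀ (P w)) (hrange (P w))]; ring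
    rw [ha_add, e1, e2]
  have hx := hnn (P₀ u)
  have hy := hnn w
  have hl := hlow w
  have hh := hhigh w
  constructor
  · rw [hform, hdecomp]; nlinarith
  · rw [hform, hdecomp]; nlinarith
end
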